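/- (Theorem modThetaLM, splitting identity) For all λ₀ ∈ L*, τ ∈ ℍ and ζ ∈ V_ℂ one has θ_{λ₀+L}(τ, ζ; v) = Σ_{δ ∈ D_M} θ^M_δ(τ, ζ_{M_ℂ}; u) · Θ_{L,M; λ₀+L, δ}(τ, ζ_{M_ℂ^⊥}; u^⊥), where θ^M_δ denotes the Jacobi–Siegel theta component of the lattice M in (M_ℝ, B) with respect to u. -/

import Mathlib

/-!
Common setup: Jacobi--Siegel theta functions of an even lattice `L` of indefinite
signature, with respect to a Grassmannian element `v = (v₊, v₋)`.

We model the real quadratic space `V` concretely as `ι → ℝ` (`ι` finite), its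
complexification `V_ℂ` as `ι → ℂ`, the bilinear form `B` as a plain function
(with bilinearity imposed as a hypothesis), the lattice `L` as a `ℤ`-submodule,
and the projections onto `v₊` and `v₋` as plain functions (with the projection
properties imposed as hypotheses).
-/

noncomputable section

namespace JacobiIndef

/-- `e(w) = exp(2 π i w)`. -/
def eC (w : ℂ) : ℂ := Complex.exp (2 * (Real.pi : ℂ) * Complex.I * w)

variable {ι : Type*} [Fintype ι]

/-- Inclusion of real vectors into the complexification. -/
def cV (x : ι → ℝ) : ι → ℂ := fun i => (x i : ℂ)

/-- Real part of a complex vector. -/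
def reV (z : ι → ℂ) : ι → ℝ := fun i => (z i).re

/-- Imaginary part of a complex vector. -/
def imV (z : ι → ℂ) : ι → ℝ := fun i => (z i).im

/-- The ℂ-linear extension of a real map `p`, acting on complex vectors. -/
def mapC (p : (ι → ℝ) → (ι → ℝ)) (z : ι → ℂ) : ι → ℂ :=
  cV (p (reV z)) + Complex.I • cV (p (imV z))

/-- `B(x, ζ)` for a real vector `x` and a complex vector `ζ` (ℂ-linear in `ζ`). -/
def pairC (B : (ι → ℝ) → (ι → ℝ) → ℝ) (x : ι → ℝ) (z : ι → ℂ) : ℂ :=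
  (B x (reV z) : ℂ) + Complex.I * (B x (imV z) : ℂ)

/-- The ℂ-bilinear extension of `B` to complex vectors. -/
def pairCC (B : (ι → ℝ) → (ι → ℝ) → ℝ) (z w : ι → ℂ) : ℂ :=
  ((B (reV z) (reV w) - B (imV z) (imV w) : ℝ) : ℂ)
    + Complex.I * ((B (reV z) (imV w) + B (imV z) (reV w) : ℝ) : ℂ)

/-- `B` is a symmetric bilinear form on `ι → ℝ`. -/
def IsSymmBilin (B : (ι → ℝ) → (ι → ℝ) → ℝ) : Prop :=
  (∀ x y z, B (x + y) z = B x z + B y z) ∧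
  (∀ (c : ℝ) (x y), B (c • x) y = c * B x y) ∧
  (∀ x y, B x y = B y x)

/-- `B` is nondegenerate. -/
def Nondeg (B : (ι → ℝ) → (ι → ℝ) → ℝ) : Prop :=
  ∀ x, (∀ y, B x y = 0) → x = 0

/-- `pp`, `pm` are the projections of a Grassmannian element: an orthogonal
decomposition `V = v₊ ⊕ v₋` with `B` positive definite on `v₊ = range pp` and
negative definite on `v₋ = range pm`. -/
def IsGrass (B : (ι → ℝ) → (ι → ℝ) → ℝ) (pp pm : (ι → ℝ) → (ι → ℝ)) : Prop :=
  (∀ x y, pp (x + y) = pp x + pp y) ∧ (∀ (c : ℝ) (x), pp (c • x) = c • pp x) ∧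
  (∀ x y, pm (x + y) = pm x + pm y) ∧ (∀ (c : ℝ) (x), pm (c • x) = c • pm x) ∧
  (∀ x, pp x + pm x = x) ∧ (∀ x, pp (pp x) = pp x) ∧ (∀ x, pm (pm x) = pm x) ∧
  (∀ x y, B (pp x) (pm y) = 0) ∧
  (∀ x, pp x ≠ 0 → 0 < B (pp x) (pp x)) ∧
  (∀ x, pm x ≠ 0 → B (pm x) (pm x) < 0)

/-- `L` is a full lattice: the ℤ-span of an ℝ-basis of `V`. -/
def IsFullLattice (L : Submodule ℤ (ι → ℝ)) : Prop :=
  ∃ b : Module.Basis ι ℝ (ι → ℝ), L = Submodule.span ℤ (Set.range ⇑b)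

/-- `L` is even with respect to `B`: integral pairings and even norms. -/
def IsEvenLat (B : (ι → ℝ) → (ι → ℝ) → ℝ) (L : Submodule ℤ (ι → ℝ)) : Prop :=
  (∀ x ∈ L, ∀ y ∈ L, ∃ n : ℤ, B x y = (n : ℝ)) ∧
  (∀ x ∈ L, ∃ n : ℤ, B x x = 2 * (n : ℝ))

/-- The dual lattice `L* = {x | B(x, L) ⊆ ℤ}`, as a set. -/
def dualSet (B : (ι → ℝ) → (ι → ℝ) → ℝ) (L : Submodule ℤ (ι → ℝ)) : Set (ι → ℝ) :=
  {x | ∀ m ∈ L, ∃ n : ℤ, B x m = (n : ℝ)}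

/-- The equivalence relation "congruent modulo `L`" on a set `S` of vectors. -/
def cosetSetoid (L : Submodule ℤ (ι → ℝ)) (S : Set (ι → ℝ)) : Setoid S where
  r x y := (x : ι → ℝ) - (y : ι → ℝ) ∈ L
  iseqv := by
    refine ⟨fun x => by simp, fun {x y} h => ?_, fun {x y z} h1 h2 => ?_⟩
    · have := L.neg_mem h
      simpa [neg_sub] using this
    · have := L.add_mem h1 h2
      rwa [sub_add_sub_cancel] at this

/-- The set of cosets of `L` in `S` (e.g. `D_L = L*/L`). -/
def DiscT (L : Submodule ℤ (ι → ℝ)) (S : Set (ι → ℝ)) : Type _ :=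
  Quotient (cosetSetoid L S)

/-- The discriminant group `D_L = L*/L` (as a type of cosets). -/
def Disc (B : (ι → ℝ) → (ι → ℝ) → ℝ) (L : Submodule ℤ (ι → ℝ)) : Type _ :=
  DiscT L (dualSet B L)

/-- A representative of a coset. -/
def qRep {L : Submodule ℤ (ι → ℝ)} {S : Set (ι → ℝ)} (q : DiscT L S) : ι → ℝ :=
  (Quotient.out (s := cosetSetoid L S) q).1

/-- The class of an element in a coset space. -/
def mkD {L : Submodule ℤ (ι → ℝ)} {S : Set (ι → ℝ)} (x : ι → ℝ) (hx : x ∈ S) :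
    DiscT L S :=
  Quotient.mk (cosetSetoid L S) ⟨x, hx⟩

/-- The Jacobi--Siegel theta component
`θ_{λ₀+L}(τ, ζ; v) = Σ_{λ ∈ λ₀+L} e(τ λ_{v₊}²/2 + τ̄ λ_{v₋}²/2 + B(λ, ζ))`. -/
def theta (B : (ι → ℝ) → (ι → ℝ) → ℝ) (pp pm : (ι → ℝ) → (ι → ℝ))
    (L : Submodule ℤ (ι → ℝ)) (lam0 : ι → ℝ) (τ : ℂ) (ζ : ι → ℂ) : ℂ :=
  ∑' μ : L, eC (τ * (B (pp (lam0 + (μ : ι → ℝ))) (pp (lam0 + (μ : ι → ℝ))) : ℂ) / 2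
    + (starRingEnd ℂ) τ * (B (pm (lam0 + (μ : ι → ℝ))) (pm (lam0 + (μ : ι → ℝ))) : ℂ) / 2
    + pairC B (lam0 + (μ : ι → ℝ)) ζ)

/-- The Jacobi--Siegel theta component with characteristics `(α, β)`. -/
def thetaChar (B : (ι → ℝ) → (ι → ℝ) → ℝ) (pp pm : (ι → ℝ) → (ι → ℝ))
    (L : Submodule ℤ (ι → ℝ)) (lam0 α β : ι → ℝ) (τ : ℂ) (ζ : ι → ℂ) : ℂ :=
  ∑' μ : L,
    eC (τ * (B (pp (lam0 + (μ : ι → ℝ) + β)) (pp (lam0 + (μ : ι → ℝ) + β)) : ℂ) / 2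
      + (starRingEnd ℂ) τ
          * (B (pm (lam0 + (μ : ι → ℝ) + β)) (pm (lam0 + (μ : ι → ℝ) + β)) : ℂ) / 2
      + pairC B (lam0 + (μ : ι → ℝ) + β) ζ
      - (B (lam0 + (μ : ι → ℝ) + (2⁻¹ : ℝ) • β) α : ℂ))

/-- The normalized theta with characteristics `θ̂ = e(-B(α,β)/2)·θ(·;(α,β);·)`. -/
def thetaHat (B : (ι → ℝ) → (ι → ℝ) → ℝ) (pp pm : (ι → ℝ) → (ι → ℝ))
    (L : Submodule ℤ (ι → ℝ)) (lam0 α β : ι → ℝ) (τ : ℂ) (ζ : ι → ℂ) : ℂ :=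
  eC (-(B α β : ℂ) / 2) * thetaChar B pp pm L lam0 α β τ ζ

/-- The elliptic functional equation for index `(L, v)`. -/
def SatElliptic (B : (ι → ℝ) → (ι → ℝ) → ℝ) (pp pm : (ι → ℝ) → (ι → ℝ))
    (L : Submodule ℤ (ι → ℝ)) (Φ : ℂ → (ι → ℂ) → ℂ) : Prop :=
  ∀ τ : ℂ, 0 < τ.im → ∀ ζ : ι → ℂ, ∀ σ ∈ L, ∀ ν ∈ L,
    Φ τ (ζ + τ • cV (pp σ) + (starRingEnd ℂ) τ • cV (pm σ) + cV ν)
      = eC (-(τ * (B (pp σ) (pp σ) : ℂ) / 2)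
            - (starRingEnd ℂ) τ * (B (pm σ) (pm σ) : ℂ) / 2
            - pairC B σ ζ) * Φ τ ζ

/-- The modular functional equation of (doubled) weight `(k2/2, l2/2)` for a matrix
`A = [[a,b],[c,d]]` with chosen square root `φ` of `j(A, ·)`, and index `(L, v)`. -/
def SatModular (B : (ι → ℝ) → (ι → ℝ) → ℝ) (pp pm : (ι → ℝ) → (ι → ℝ))
    (k2 l2 : ℤ) (a b c d : ℤ) (φ : ℂ → ℂ) (Φ : ℂ → (ι → ℂ) → ℂ) : Prop :=
  ∀ τ : ℂ, 0 < τ.im → ∀ ζ : ι → ℂ,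
    Φ (((a : ℂ) * τ + (b : ℂ)) / ((c : ℂ) * τ + (d : ℂ)))
      (((c : ℂ) * τ + (d : ℂ))⁻¹ • mapC pp ζ
        + ((starRingEnd ℂ) ((c : ℂ) * τ + (d : ℂ)))⁻¹ • mapC pm ζ)
      = φ τ ^ k2 * (starRingEnd ℂ) (φ τ) ^ l2
        * eC ((c : ℂ) * pairCC B (mapC pp ζ) (mapC pp ζ)
                / (2 * ((c : ℂ) * τ + (d : ℂ)))
              + (c : ℂ) * pairCC B (mapC pm ζ) (mapC pm ζ)
                / (2 * (starRingEnd ℂ) ((c : ℂ) * τ + (d : ℂ))))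
        * Φ τ ζ

/-- Complex directional derivative in the `ζ` variable, in the direction of a real
vector `w`. -/
def dirDeriv (w : ι → ℝ) (f : (ι → ℂ) → ℂ) (ζ : ι → ℂ) : ℂ :=
  deriv (fun z : ℂ => f (ζ + z • cV w)) 0

/-- The holomorphic Laplacian `Δ^h` attached to a basis `ws` with `B`-dual basis
`wds`. -/
def lapl {n : ℕ} (ws wds : Fin n → (ι → ℝ)) (f : (ι → ℂ) → ℂ) (ζ : ι → ℂ) : ℂ :=
  ∑ i : Fin n, dirDeriv (ws i) (fun ζ' => dirDeriv (wds i) f ζ') ζ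

/-- The Wirtinger derivative `∂_τ = (∂_x - i ∂_y)/2`. -/
def wirtD (g : ℂ → ℂ) (τ : ℂ) : ℂ :=
  (fderiv ℝ g τ 1 - Complex.I * fderiv ℝ g τ Complex.I) / 2

/-- The Wirtinger derivative `∂_{τ̄} = (∂_x + i ∂_y)/2`. -/
def wirtDBar (g : ℂ → ℂ) (τ : ℂ) : ℂ :=
  (fderiv ℝ g τ 1 + Complex.I * fderiv ℝ g τ Complex.I) / 2

/-- `ws`, `wds` form a basis of the subspace `range p` together with its `B`-dual
basis. -/
def IsDualBasisOf (B : (ι → ℝ) → (ι → ℝ) → ℝ) (p : (ι → ℝ) → (ι → ℝ))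
    {n : ℕ} (ws wds : Fin n → (ι → ℝ)) : Prop :=
  (∀ i, p (ws i) = ws i) ∧ (∀ i, p (wds i) = wds i) ∧
  LinearIndependent ℝ ws ∧
  Submodule.span ℝ (Set.range ws) = Submodule.span ℝ (Set.range p) ∧
  (∀ i j, B (ws i) (wds j) = if i = j then (1 : ℝ) else 0)



/-! ### Auxiliary lemmas for the proof of `statement_14` -/

set_option linter.unusedSectionVars false

section AuxAnalysis

theorem summable_exp_neg_int_sq {a : ℝ} (ha : 0 < a) :
    Summable fun n : ℤ => Real.exp (-a * (n : ℝ) ^ 2) := by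
  have hnat : Summable fun n : ℕ => Real.exp (-a * (n : ℝ) ^ 2) := by
    refine Summable.of_nonneg_of_le (fun n => (Real.exp_pos _).le) (fun n => ?_)
      (summable_geometric_of_lt_one (Real.exp_pos (-a)).le
        (Real.exp_lt_one_iff.2 (by linarith)))
    rw [← Real.exp_nat_mul]
    apply Real.exp_le_exp.2
    have : (n : ℝ) ≤ (n : ℝ) ^ 2 := by
      exact_mod_cast Nat.cast_le.2 (Nat.le_self_pow two_ne_zero n)
    nlinarith
  apply Summable.of_nat_of_neg <;> simpa using hnat

theorem summable_prod_exp {a : ℝ} (ha : 0 < a) :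
    Summable fun n : ι → ℤ => ∏ i, Real.exp (-a * (n i : ℝ) ^ 2) := by
  classical
  set T : ℝ := ∑' m : ℤ, Real.exp (-a * (m : ℝ) ^ 2) with hT
  have hTnn : 0 ≤ T := tsum_nonneg fun m => (Real.exp_pos _).le
  apply summable_of_sum_le (c := ∏ _i : ι, T)
    (fun n => Finset.prod_nonneg fun i _ => (Real.exp_pos _).le)
  intro u
  have hsub : u ⊆ Fintype.piFinset (fun i => (u.image (fun n => n i) : Finset ℤ)) := by
    intro n hn
    rw [Fintype.mem_piFinset]
    exact fun i => Finset.mem_image_of_mem _ hn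
  calc ∑ n ∈ u, ∏ i, Real.exp (-a * (n i : ℝ) ^ 2)
      ≤ ∑ n ∈ Fintype.piFinset (fun i => (u.image (fun n => n i) : Finset ℤ)),
          ∏ i, Real.exp (-a * (n i : ℝ) ^ 2) :=
        Finset.sum_le_sum_of_subset_of_nonneg hsub
          (fun n _ _ => Finset.prod_nonneg fun i _ => (Real.exp_pos _).le)
    _ = ∏ i, ∑ m ∈ (u.image (fun n => n i) : Finset ℤ), Real.exp (-a * (m : ℝ) ^ 2) := by
        rw [Finset.prod_univ_sum]
    _ ≤ ∏ _i : ι, T := by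
        apply Finset.prod_le_prod
        · intro i _
          exact Finset.sum_nonneg fun m _ => (Real.exp_pos _).le
        · intro i _
          exact Summable.sum_le_tsum _ (fun m _ => (Real.exp_pos _).le) (summable_exp_neg_int_sq ha)

theorem posdef_lower {N : (ι → ℝ) → ℝ} (hcont : Continuous N)
    (hpos : ∀ x, x ≠ 0 → 0 < N x) (hhom : ∀ (t : ℝ) x, N (t • x) = t ^ 2 * N x) :
    ∃ c > 0, ∀ x, c * ‖x‖ ^ 2 ≤ N x := by
  classical
  have hN0 : N 0 = 0 := by
    have := hhom 0 0
    simpa using this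
  rcases isEmpty_or_nonempty ι with hι | hι
  · refine ⟨1, one_pos, fun x => ?_⟩
    have hx : x = 0 := Subsingleton.elim x 0
    simp [hx, hN0]
  · -- the sphere is nonempty and compact
    obtain ⟨i₀⟩ := hι
    set v : ι → ℝ := Pi.single i₀ (1:ℝ) with hv
    have hne : v ≠ 0 := by
      intro h
      have := congrFun h i₀
      simp [hv] at this
    set x₀ : ι → ℝ := (‖v‖)⁻¹ • v with hx₀
    have hx₀mem : x₀ ∈ Metric.sphere (0 : ι → ℝ) 1 := by
      rw [mem_sphere_zero_iff_norm]
      exact_mod_cast norm_smul_inv_norm (𝕜 := ℝ) hne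
    obtain ⟨z, hz, hmin⟩ := (isCompact_sphere (0 : ι → ℝ) 1).exists_isMinOn ⟨x₀, hx₀mem⟩
      hcont.continuousOn
    have hz1 : ‖z‖ = 1 := mem_sphere_zero_iff_norm.1 hz
    have hzne : z ≠ 0 := by intro h; rw [h] at hz1; simp at hz1
    refine ⟨N z, hpos z hzne, fun x => ?_⟩
    rcases eq_or_ne x 0 with rfl | hx
    · simp [hN0]
    · have hxn : ‖x‖ ≠ 0 := norm_ne_zero_iff.2 hx
      have hymem : (‖x‖)⁻¹ • x ∈ Metric.sphere (0 : ι → ℝ) 1 := by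
        rw [mem_sphere_zero_iff_norm]
        exact_mod_cast norm_smul_inv_norm (𝕜 := ℝ) hx
      have hle : N z ≤ N ((‖x‖)⁻¹ • x) := hmin hymem
      have h2 : N x = ‖x‖ ^ 2 * N ((‖x‖)⁻¹ • x) := by
        rw [← hhom, smul_smul, mul_inv_cancel₀ hxn, one_smul]
      nlinarith [sq_nonneg ‖x‖]


theorem basis_coord_bound (b : Module.Basis ι ℝ (ι → ℝ)) :
    ∃ Cb > 0, ∀ x : ι → ℝ, ‖b.equivFun x‖ ≤ Cb * ‖x‖ := by
  let g : (ι → ℝ) →L[ℝ] (ι → ℝ) :=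
    LinearMap.toContinuousLinearMap (b.equivFun : (ι → ℝ) →ₗ[ℝ] (ι → ℝ))
  refine ⟨‖g‖ + 1, by positivity, fun x => ?_⟩
  have h1 : ‖b.equivFun x‖ = ‖g x‖ := rfl
  have := g.le_opNorm x
  nlinarith [norm_nonneg x, norm_nonneg g, norm_nonneg (g x)]

theorem lattice_equiv (b : Module.Basis ι ℝ (ι → ℝ)) :
    ∃ e : (ι → ℤ) ≃ (Submodule.span ℤ (Set.range ⇑b)),
      ∀ n : ι → ℤ, (e n : ι → ℝ) = ∑ i, (n i : ℝ) • b i := by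
  classical
  have hmem : ∀ n : ι → ℤ, (∑ i, (n i : ℝ) • b i) ∈ Submodule.span ℤ (Set.range ⇑b) := by
    intro n
    apply Submodule.sum_mem
    intro i _
    rw [Int.cast_smul_eq_zsmul ℝ]
    exact Submodule.smul_mem _ (n i) (Submodule.subset_span (Set.mem_range_self i))
  refine ⟨Equiv.ofBijective (fun n => ⟨∑ i, (n i : ℝ) • b i, hmem n⟩) ⟨?_, ?_⟩, fun n => rfl⟩
  · intro n m h
    have h' : ∑ i, (n i : ℝ) • b i = ∑ i, (m i : ℝ) • b i := congrArg Subtype.val h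
    rw [← b.equivFun_symm_apply, ← b.equivFun_symm_apply] at h'
    have := b.equivFun.symm.injective h'
    funext i
    have := congrFun this i
    exact_mod_cast this
  · rintro ⟨x, hx⟩
    obtain ⟨c, hc⟩ := (Submodule.mem_span_range_iff_exists_fun (R := ℤ)).1 hx
    refine ⟨c, ?_⟩
    apply Subtype.ext
    simp only
    rw [← hc]
    congr 1
    funext i
    rw [Int.cast_smul_eq_zsmul ℝ]

theorem summable_exp_lattice'' (b : Module.Basis ι ℝ (ι → ℝ))
    {a C : ℝ} (ha : 0 < a)
    (hsum : ∀ a' : ℝ, 0 < a' → Summable fun n : ι → ℤ => ∏ i, Real.exp (-a' * (n i : ℝ) ^ 2))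
    (hcb : ∃ Cb > 0, ∀ x : ι → ℝ, ‖b.equivFun x‖ ≤ Cb * ‖x‖) :
    Summable fun μ : (Submodule.span ℤ (Set.range ⇑b)) =>
      Real.exp (-a * ‖(μ : ι → ℝ)‖ ^ 2 + C * ‖(μ : ι → ℝ)‖) := by
  classical
  obtain ⟨e, he⟩ := lattice_equiv b
  rw [← e.summable_iff]
  obtain ⟨Cb, hCb, hCbound⟩ := hcb
  set d : ℝ := (Fintype.card ι : ℝ) + 1 with hd
  have hdpos : 0 < d := by positivity
  set a₄ : ℝ := a / (2 * d * Cb ^ 2) with ha₄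
  have ha₄pos : 0 < a₄ := by positivity
  set K : ℝ := Real.exp (C ^ 2 / (2 * a)) with hK
  simp only [Function.comp_def]
  refine Summable.of_nonneg_of_le (fun n => (Real.exp_pos _).le) (fun n => ?_)
    ((hsum a₄ ha₄pos).mul_left K)
  · 
    -- coordinates of e n are n
    have hco : b.equivFun ((e n : ι → ℝ)) = fun i => (n i : ℝ) := by
      rw [he n, ← b.equivFun_symm_apply]
      exact b.equivFun.apply_symm_apply _
    set r : ℝ := ‖(e n : ι → ℝ)‖ with hr
    have hrnn : 0 ≤ r := norm_nonneg _
    have hcoord : ∀ i, |(n i : ℝ)| ≤ Cb * r := by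
      intro i
      have h1 : |(n i : ℝ)| ≤ ‖b.equivFun ((e n : ι → ℝ))‖ := by
        rw [hco]
        exact (norm_le_pi_norm (fun i => (n i : ℝ)) i).trans_eq' (by simp [Real.norm_eq_abs])
      exact h1.trans (hCbound _)
    have hsq : ∑ i, (n i : ℝ) ^ 2 ≤ d * Cb ^ 2 * r ^ 2 := by
      calc ∑ i, (n i : ℝ) ^ 2 ≤ ∑ _i : ι, (Cb * r) ^ 2 := by
            apply Finset.sum_le_sum
            intro i _
            have := hcoord i
            nlinarith [abs_nonneg ((n i : ℝ)), sq_abs ((n i : ℝ))]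
        _ = (Fintype.card ι : ℝ) * (Cb * r) ^ 2 := by
            rw [Finset.sum_const, Finset.card_univ, nsmul_eq_mul]
        _ ≤ d * Cb ^ 2 * r ^ 2 := by
            rw [hd]; nlinarith [sq_nonneg (Cb * r), sq_nonneg r, sq_nonneg Cb]
    -- the exponent bound
    have hexp : -a * r ^ 2 + C * r ≤ C ^ 2 / (2 * a) + -a₄ * ∑ i, (n i : ℝ) ^ 2 := by
      have h2a : (0:ℝ) < 2 * a := by linarith
      have hAM : C * r - a / 2 * r ^ 2 ≤ C ^ 2 / (2 * a) := by
        rw [le_div_iff₀ h2a]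
        nlinarith [sq_nonneg (a * r - C)]
      have heq : a₄ * (d * Cb ^ 2 * r ^ 2) = a / 2 * r ^ 2 := by
        rw [ha₄]; field_simp
      have h2 : a₄ * ∑ i, (n i : ℝ) ^ 2 ≤ a / 2 * r ^ 2 := by
        rw [← heq]
        exact mul_le_mul_of_nonneg_left hsq ha₄pos.le
      nlinarith [hAM, h2]
    calc Real.exp (-a * r ^ 2 + C * r) ≤ Real.exp (C ^ 2 / (2 * a) + -a₄ * ∑ i, (n i : ℝ) ^ 2) :=
          Real.exp_le_exp.2 hexp
      _ = K * ∏ i, Real.exp (-a₄ * (n i : ℝ) ^ 2) := by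
          rw [Real.exp_add, hK, ← Real.exp_sum]
          congr 1
          rw [Finset.mul_sum]


theorem eC_add (w₁ w₂ : ℂ) : eC (w₁ + w₂) = eC w₁ * eC w₂ := by
  rw [eC, eC, eC, mul_add, Complex.exp_add]

theorem norm_eC (w : ℂ) : ‖eC w‖ = Real.exp (-(2 * Real.pi * w.im)) := by
  rw [eC, Complex.norm_exp]
  congr 1
  simp [Complex.mul_re, Complex.mul_im]

theorem exponent_im (B : (ι → ℝ) → (ι → ℝ) → ℝ) (τ : ℂ) (a b : ℝ) (x : ι → ℝ) (ζ : ι → ℂ) :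
    (τ * (a : ℂ) / 2 + (starRingEnd ℂ) τ * (b : ℂ) / 2 + pairC B x ζ).im
      = τ.im * (a - b) / 2 + B x (imV ζ) := by
  simp [pairC, Complex.add_im, Complex.div_im, Complex.mul_im, Complex.conj_re, Complex.conj_im]
  ring

section Bil
variable {B : (ι → ℝ) → (ι → ℝ) → ℝ} {pp pm : (ι → ℝ) → (ι → ℝ)}

/-- Left slot as a linear map. -/
def bilinL (hB : IsSymmBilin B) (y : ι → ℝ) : (ι → ℝ) →ₗ[ℝ] ℝ :=
  IsLinearMap.mk' (fun x => B x y) ⟨fun a b => hB.1 a b y, fun c a => hB.2.1 c a y⟩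

theorem B_zero_left (hB : IsSymmBilin B) (y : ι → ℝ) : B 0 y = 0 :=
  map_zero (bilinL hB y)

theorem B_zero_right (hB : IsSymmBilin B) (x : ι → ℝ) : B x 0 = 0 := by
  rw [hB.2.2]; exact B_zero_left hB x

theorem B_add_right (hB : IsSymmBilin B) (x y z : ι → ℝ) : B x (y + z) = B x y + B x z := by
  rw [hB.2.2, hB.1, hB.2.2 y x, hB.2.2 z x]

theorem B_sub_left (hB : IsSymmBilin B) (x y z : ι → ℝ) : B (x - y) z = B x z - B y z :=
  map_sub (bilinL hB z) x y

theorem B_sum_left (hB : IsSymmBilin B) {κ : Type*} (s : Finset κ) (u : κ → (ι → ℝ))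
    (y : ι → ℝ) : B (∑ i ∈ s, u i) y = ∑ i ∈ s, B (u i) y :=
  map_sum (bilinL hB y) u s

theorem B_repr [DecidableEq ι] (hB : IsSymmBilin B) (x y : ι → ℝ) :
    B x y = ∑ i, ∑ j, x i * y j *
      B (fun k => if i = k then (1:ℝ) else 0) (fun k => if j = k then (1:ℝ) else 0) := by
  set e : ι → (ι → ℝ) := fun i => fun k => if i = k then (1:ℝ) else 0 with he
  have hrepr : ∀ z : ι → ℝ, z = ∑ i, z i • e i := fun z => pi_eq_sum_univ z
  have hleft : ∀ z : ι → ℝ, B z y = ∑ i, z i * B (e i) y := by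
    intro z
    conv_lhs => rw [hrepr z]
    rw [B_sum_left hB]
    exact Finset.sum_congr rfl fun i _ => hB.2.1 _ _ _
  rw [hleft]
  refine Finset.sum_congr rfl fun i _ => ?_
  have : B (e i) y = ∑ j, y j * B (e j) (e i) := by
    rw [hB.2.2]
    conv_lhs => rw [hrepr y]
    rw [B_sum_left hB]
    exact Finset.sum_congr rfl fun j _ => hB.2.1 _ _ _
  rw [this, Finset.mul_sum]
  exact Finset.sum_congr rfl fun j _ => by rw [hB.2.2 (e j) (e i)]; ring

theorem B_bound (hB : IsSymmBilin B) (w : ι → ℝ) :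
    ∃ C₀ ≥ 0, ∀ x : ι → ℝ, |B x w| ≤ C₀ * ‖x‖ := by
  classical
  set e : ι → (ι → ℝ) := fun i => fun k => if i = k then (1:ℝ) else 0 with he
  refine ⟨∑ i, ∑ j, |w j * B (e i) (e j)|,
    Finset.sum_nonneg fun i _ => Finset.sum_nonneg fun j _ => abs_nonneg _, fun x => ?_⟩
  rw [B_repr hB x w]
  calc |∑ i, ∑ j, x i * w j * B (e i) (e j)|
      ≤ ∑ i, |∑ j, x i * w j * B (e i) (e j)| := Finset.abs_sum_le_sum_abs _ _
    _ ≤ ∑ i, ∑ j, |x i * w j * B (e i) (e j)| :=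
        Finset.sum_le_sum fun i _ => Finset.abs_sum_le_sum_abs _ _
    _ ≤ ∑ i, ∑ j, |w j * B (e i) (e j)| * ‖x‖ := by
        refine Finset.sum_le_sum fun i _ => Finset.sum_le_sum fun j _ => ?_
        rw [abs_mul, abs_mul, abs_mul]
        have hx : |x i| ≤ ‖x‖ := by
          simpa [Real.norm_eq_abs] using norm_le_pi_norm x i
        calc |x i| * |w j| * |B (e i) (e j)| ≤ ‖x‖ * |w j| * |B (e i) (e j)| := by
              apply mul_le_mul_of_nonneg_right (mul_le_mul_of_nonneg_right hx (abs_nonneg _))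
                (abs_nonneg _)
          _ = |w j| * |B (e i) (e j)| * ‖x‖ := by ring
    _ = (∑ i, ∑ j, |w j * B (e i) (e j)|) * ‖x‖ := by
        rw [Finset.sum_mul]
        exact Finset.sum_congr rfl fun i _ => by rw [Finset.sum_mul]

/-- Continuity of `x ↦ B (p x) (p x)` for additive homogeneous `p`. -/
theorem quad_continuous (hB : IsSymmBilin B) {p : (ι → ℝ) → (ι → ℝ)}
    (hadd : ∀ x y, p (x + y) = p x + p y) (hsmul : ∀ (c : ℝ) x, p (c • x) = c • p x) :
    Continuous fun x => B (p x) (p x) := by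
  classical
  have hp : Continuous p := (IsLinearMap.mk' p ⟨hadd, hsmul⟩).continuous_of_finiteDimensional
  have : (fun x => B (p x) (p x)) = fun x => ∑ i, ∑ j, p x i * p x j *
      B (fun k => if i = k then (1:ℝ) else 0) (fun k => if j = k then (1:ℝ) else 0) := by
    funext x
    exact B_repr hB (p x) (p x)
  rw [this]
  refine continuous_finset_sum _ fun i _ => continuous_finset_sum _ fun j _ => ?_
  exact (((continuous_apply i).comp hp).mul ((continuous_apply j).comp hp)).mul continuous_const

theorem B_nonneg_pp (hB : IsSymmBilin B) (hG : IsGrass B pp pm) (x : ι → ℝ) :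
    0 ≤ B (pp x) (pp x) := by
  rcases eq_or_ne (pp x) 0 with h | h
  · rw [h, B_zero_left hB]
  · exact (hG.2.2.2.2.2.2.2.2.1 x h).le

theorem B_nonpos_pm (hB : IsSymmBilin B) (hG : IsGrass B pp pm) (x : ι → ℝ) :
    B (pm x) (pm x) ≤ 0 := by
  rcases eq_or_ne (pm x) 0 with h | h
  · rw [h, B_zero_left hB]
  · exact (hG.2.2.2.2.2.2.2.2.2 x h).le

theorem N_posdef (hB : IsSymmBilin B) (hG : IsGrass B pp pm) (x : ι → ℝ) (hx : x ≠ 0) :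
    0 < B (pp x) (pp x) - B (pm x) (pm x) := by
  have hsum := hG.2.2.2.2.1 x
  have : pp x ≠ 0 ∨ pm x ≠ 0 := by
    by_contra h
    push_neg at h
    rw [h.1, h.2, add_zero] at hsum
    exact hx hsum.symm
  rcases this with h | h
  · have := hG.2.2.2.2.2.2.2.2.1 x h
    have := B_nonpos_pm hB hG (pp := pp) x
    linarith
  · have := hG.2.2.2.2.2.2.2.2.2 x h
    have := B_nonneg_pp hB hG (pm := pm) x
    linarith

theorem N_smul (hB : IsSymmBilin B) (hG : IsGrass B pp pm) (t : ℝ) (x : ι → ℝ) :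
    B (pp (t • x)) (pp (t • x)) - B (pm (t • x)) (pm (t • x))
      = t ^ 2 * (B (pp x) (pp x) - B (pm x) (pm x)) := by
  have h1 : ∀ u : ι → ℝ, B (t • u) (t • u) = t ^ 2 * B u u := by
    intro u
    rw [hB.2.1, hB.2.2, hB.2.1, hB.2.2]
    ring
  rw [hG.2.1, hG.2.2.2.1, h1, h1]
  ring
end Bil

section Master
variable {B : (ι → ℝ) → (ι → ℝ) → ℝ} {pp pm : (ι → ℝ) → (ι → ℝ)}

/-- Master summability: the theta series terms are absolutely summable. -/
theorem summable_master (hB : IsSymmBilin B) (hG : IsGrass B pp pm)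
    {L : Submodule ℤ (ι → ℝ)} (hL : IsFullLattice L) {τ : ℂ} (hτ : 0 < τ.im)
    (ζ : ι → ℂ) (x0 : ι → ℝ) :
    Summable fun μ : L => eC (τ * (B (pp (x0 + ↑μ)) (pp (x0 + ↑μ)) : ℂ) / 2
      + (starRingEnd ℂ) τ * (B (pm (x0 + ↑μ)) (pm (x0 + ↑μ)) : ℂ) / 2
      + pairC B (x0 + ↑μ) ζ) := by
  classical
  rw [← summable_norm_iff]
  set N : (ι → ℝ) → ℝ := fun x => B (pp x) (pp x) - B (pm x) (pm x) with hN
  obtain ⟨c₀, hc₀, hc₀le⟩ : ∃ c > 0, ∀ x, c * ‖x‖ ^ 2 ≤ N x := by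
    apply posdef_lower
    · exact (quad_continuous hB hG.1 hG.2.1).sub (quad_continuous hB hG.2.2.1 hG.2.2.2.1)
    · exact fun x hx => N_posdef hB hG x hx
    · exact fun t x => N_smul hB hG t x
  obtain ⟨C₀, hC₀, hC₀le⟩ := B_bound hB (imV ζ)
  -- per-term norm computation
  have hnorm : ∀ x : ι → ℝ, ‖eC (τ * (B (pp x) (pp x) : ℂ) / 2
      + (starRingEnd ℂ) τ * (B (pm x) (pm x) : ℂ) / 2 + pairC B x ζ)‖
      = Real.exp (-(2 * Real.pi * (τ.im * N x / 2 + B x (imV ζ)))) := by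
    intro x
    rw [norm_eC, exponent_im]
  set π := Real.pi with hπ
  have hπpos : 0 < π := Real.pi_pos
  set a : ℝ := π * τ.im * c₀ / 2 with ha
  have hapos : 0 < a := by positivity
  set C : ℝ := 2 * π * C₀ with hC
  have hCnn : 0 ≤ C := by positivity
  set K : ℝ := Real.exp (2 * π * τ.im * c₀ / 2 * ‖x0‖ ^ 2 + 2 * π * C₀ * ‖x0‖) with hK
  obtain ⟨b, rfl⟩ := hL
  have hlat : Summable fun μ : (Submodule.span ℤ (Set.range ⇑b)) =>
      K * Real.exp (-a * ‖(μ : ι → ℝ)‖ ^ 2 + C * ‖(μ : ι → ℝ)‖) :=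
    (summable_exp_lattice'' b (C := C) hapos (fun a' ha' => summable_prod_exp ha')
      (basis_coord_bound b)).mul_left K
  refine Summable.of_nonneg_of_le (fun μ => norm_nonneg _) (fun μ => ?_) hlat
  rw [hnorm]
  rw [← Real.exp_add]
  apply Real.exp_le_exp.2
  set x : ι → ℝ := x0 + ↑μ with hx
  have h1 : c₀ * ‖x‖ ^ 2 ≤ N x := hc₀le x
  have h2 : -C₀ * ‖x‖ ≤ B x (imV ζ) := by
    have := (abs_le.1 (hC₀le x)).1
    linarith
  have h3 : ‖x‖ ≤ ‖(μ : ι → ℝ)‖ + ‖x0‖ := by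
    rw [hx]
    exact (norm_add_le _ _).trans (by rw [add_comm])
  have h4 : ‖(μ : ι → ℝ)‖ ^ 2 / 2 - ‖x0‖ ^ 2 ≤ ‖x‖ ^ 2 := by
    have h5 : ‖(μ : ι → ℝ)‖ ≤ ‖x‖ + ‖x0‖ := by
      have : (μ : ι → ℝ) = x - x0 := by rw [hx]; ring
      rw [this]
      exact norm_sub_le _ _
    have h6 : ‖(μ : ι → ℝ)‖ ^ 2 ≤ (‖x‖ + ‖x0‖) ^ 2 :=
      pow_le_pow_left₀ (norm_nonneg _) h5 2
    nlinarith [sq_nonneg (‖x‖ - ‖x0‖)]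
  have hnx : 0 ≤ ‖x‖ := norm_nonneg _
  have hnμ : 0 ≤ ‖(μ : ι → ℝ)‖ := norm_nonneg _
  have hnx0 : 0 ≤ ‖x0‖ := norm_nonneg _
  -- final arithmetic
  have key : -(2 * π * (τ.im * N x / 2 + B x (imV ζ)))
      ≤ (2 * π * τ.im * c₀ / 2 * ‖x0‖ ^ 2 + 2 * π * C₀ * ‖x0‖)
        + (-a * ‖(μ : ι → ℝ)‖ ^ 2 + C * ‖(μ : ι → ℝ)‖) := by
    have e1 : π * τ.im * (c₀ * ‖x‖ ^ 2) ≤ π * τ.im * N x :=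
      mul_le_mul_of_nonneg_left h1 (by positivity)
    have e2 : -(2 * π) * B x (imV ζ) ≤ 2 * π * C₀ * ‖x‖ := by
      have := mul_le_mul_of_nonneg_left h2 (by positivity : (0:ℝ) ≤ 2 * π)
      nlinarith
    have e3 : 2 * π * C₀ * ‖x‖ ≤ 2 * π * C₀ * (‖(μ : ι → ℝ)‖ + ‖x0‖) :=
      mul_le_mul_of_nonneg_left h3 (by positivity)
    have e4 : π * τ.im * c₀ * (‖(μ : ι → ℝ)‖ ^ 2 / 2 - ‖x0‖ ^ 2) ≤ π * τ.im * c₀ * ‖x‖ ^ 2 :=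
      mul_le_mul_of_nonneg_left h4 (by positivity)
    rw [ha, hC]
    clear_value N π a C K x
    linarith [e1, e2, e3, e4]
  exact key
end Master

end AuxAnalysis


/-! ### Quotient and splitting helpers -/

section QuotHelpers
variable {LL : Submodule ℤ (ι → ℝ)} {S : Set (ι → ℝ)}

theorem qRep_mem (q : DiscT LL S) : qRep q ∈ S :=
  (Quotient.out (s := cosetSetoid LL S) q).2

theorem qRep_mkD_sub_mem (x : ι → ℝ) (hx : x ∈ S) : qRep (mkD (L := LL) x hx) - x ∈ LL :=
  Quotient.mk_out (s := cosetSetoid LL S) ⟨x, hx⟩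

theorem mkD_eq_of {x : ι → ℝ} {hx : x ∈ S} {q : DiscT LL S} (h : x - qRep q ∈ LL) :
    mkD x hx = q := by
  conv_rhs => rw [← Quotient.out_eq (s := cosetSetoid LL S) q]
  exact Quotient.sound h

theorem eq_of_qRep_sub_mem {q₁ q₂ : DiscT LL S} (h : qRep q₁ - qRep q₂ ∈ LL) : q₁ = q₂ := by
  conv_lhs => rw [← Quotient.out_eq (s := cosetSetoid LL S) q₁]
  conv_rhs => rw [← Quotient.out_eq (s := cosetSetoid LL S) q₂]
  exact Quotient.sound h

end QuotHelpers

section SplitHelpers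
variable {B : (ι → ℝ) → (ι → ℝ) → ℝ} {pp pm pM pN : (ι → ℝ) → (ι → ℝ)}

theorem reV_mapC (p : (ι → ℝ) → (ι → ℝ)) (z : ι → ℂ) : reV (mapC p z) = p (reV z) := by
  funext i
  simp [mapC, reV, cV, imV]

theorem imV_mapC (p : (ι → ℝ) → (ι → ℝ)) (z : ι → ℂ) : imV (mapC p z) = p (imV z) := by
  funext i
  simp [mapC, reV, cV, imV]

theorem B_split_two (hB : IsSymmBilin B) (hpMN : ∀ x, pM x + pN x = x)
    (hpMorth : ∀ x y, B (pM x) (pN y) = 0) (x y : ι → ℝ) :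
    B x y = B (pM x) (pM y) + B (pN x) (pN y) := by
  conv_lhs => rw [← hpMN x, ← hpMN y]
  rw [hB.1, B_add_right hB, B_add_right hB, hpMorth]
  rw [hB.2.2 (pN x) (pM y), hpMorth]
  ring

theorem exponent_split (hB : IsSymmBilin B) (hG : IsGrass B pp pm)
    (hpM_add : ∀ x y, pM (x + y) = pM x + pM y)
    (hpM_smul : ∀ (c : ℝ) (x), pM (c • x) = c • pM x)
    (hpMN : ∀ x, pM x + pN x = x)
    (hpMorth : ∀ x y, B (pM x) (pN y) = 0)
    (hadapt_p : ∀ x, pp (pM x) = pM (pp x))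
    (hadapt_m : ∀ x, pm (pM x) = pM (pm x))
    (τ : ℂ) (x : ι → ℝ) (ζ : ι → ℂ) :
    τ * (B (pp x) (pp x) : ℂ) / 2 + (starRingEnd ℂ) τ * (B (pm x) (pm x) : ℂ) / 2
        + pairC B x ζ
      = (τ * (B (pp (pM x)) (pp (pM x)) : ℂ) / 2
          + (starRingEnd ℂ) τ * (B (pm (pM x)) (pm (pM x)) : ℂ) / 2
          + pairC B (pM x) (mapC pM ζ))
        + (τ * (B (pp (pN x)) (pp (pN x)) : ℂ) / 2
          + (starRingEnd ℂ) τ * (B (pm (pN x)) (pm (pN x)) : ℂ) / 2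
          + pairC B (pN x) (mapC pN ζ)) := by
  have pN_eq : ∀ z, pN z = z - pM z := by
    intro z
    have := hpMN z
    abel_nf
    linear_combination (norm := abel) this
  have pp_sub : ∀ a b : ι → ℝ, pp (a - b) = pp a - pp b := fun a b => by
    simpa using map_sub (IsLinearMap.mk' pp ⟨hG.1, hG.2.1⟩) a b
  have pm_sub : ∀ a b : ι → ℝ, pm (a - b) = pm a - pm b := fun a b => by
    simpa using map_sub (IsLinearMap.mk' pm ⟨hG.2.2.1, hG.2.2.2.1⟩) a b
  have hppN : ∀ z, pp (pN z) = pN (pp z) := by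
    intro z
    rw [pN_eq z, pp_sub, pN_eq (pp z), hadapt_p]
  have hpmN : ∀ z, pm (pN z) = pN (pm z) := by
    intro z
    rw [pN_eq z, pm_sub, pN_eq (pm z), hadapt_m]
  have h1 : B (pp x) (pp x) = B (pp (pM x)) (pp (pM x)) + B (pp (pN x)) (pp (pN x)) := by
    rw [B_split_two hB hpMN hpMorth (pp x) (pp x), hadapt_p, hppN]
  have h2 : B (pm x) (pm x) = B (pm (pM x)) (pm (pM x)) + B (pm (pN x)) (pm (pN x)) := by
    rw [B_split_two hB hpMN hpMorth (pm x) (pm x), hadapt_m, hpmN]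
  have h3 : pairC B x ζ = pairC B (pM x) (mapC pM ζ) + pairC B (pN x) (mapC pN ζ) := by
    rw [pairC, pairC, pairC, reV_mapC, imV_mapC, reV_mapC, imV_mapC]
    rw [B_split_two hB hpMN hpMorth x (reV ζ), B_split_two hB hpMN hpMorth x (imV ζ)]
    push_cast
    ring
  rw [h1, h2, h3]
  push_cast
  ring

end SplitHelpers

section Sublattice

/-- The dual lattice `M* = {x ∈ M_ℝ : B(x, M) ⊆ ℤ}` of a nondegenerate sublattice
`M`, inside the subspace `M_ℝ` spanned by `M`. -/
def MdualSet (B : (ι → ℝ) → (ι → ℝ) → ℝ) (M : Submodule ℤ (ι → ℝ)) :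
    Set (ι → ℝ) :=
  {x | x ∈ Submodule.span ℝ (M : Set (ι → ℝ)) ∧ ∀ m ∈ M, ∃ n : ℤ, B x m = (n : ℝ)}

/-- The theta kernel `Θ_{L,M; γ, δ}(τ, η; u^⊥)`: the sum over the cosets
`λ ∈ L*/M` with `λ + L = γ` and `π_M(λ) = δ` of
`e(τ λ_{u⊥₊}²/2 + τ̄ λ_{u⊥₋}²/2 + B(λ_{M_ℝ^⊥}, η))`. -/
def ThetaLM (B : (ι → ℝ) → (ι → ℝ) → ℝ) (pp pm pM pN : (ι → ℝ) → (ι → ℝ))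
    (L M : Submodule ℤ (ι → ℝ))
    (γ : Disc B L) (δ : DiscT M (MdualSet B M)) (τ : ℂ) (η : ι → ℂ) : ℂ :=
  ∑' q : DiscT M (dualSet B L),
    Set.indicator
      {q' : DiscT M (dualSet B L) |
        qRep q' - qRep γ ∈ L ∧ pM (qRep q') - qRep δ ∈ M}
      (fun q' => eC (τ * (B (pp (pN (qRep q'))) (pp (pN (qRep q'))) : ℂ) / 2
        + (starRingEnd ℂ) τ * (B (pm (pN (qRep q'))) (pm (pN (qRep q'))) : ℂ) / 2
        + pairC B (pN (qRep q')) η)) q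

set_option maxHeartbeats 2000000 in
/-- Theorem modThetaLM, splitting identity: for a primitive
nondegenerate sublattice `M ⊆ L` with `v` adapted to `V = M_ℝ ⊕ M_ℝ^⊥`, one has
`θ_{λ₀+L}(τ,ζ;v) = Σ_{δ ∈ D_M} θ^M_δ(τ, ζ_{M_ℂ}; u) · Θ_{L,M; λ₀+L, δ}(τ, ζ_{M_ℂ^⊥}; u^⊥)`. -/
theorem statement_14 (B : (ι → ℝ) → (ι → ℝ) → ℝ) (pp pm : (ι → ℝ) → (ι → ℝ))
    (L : Submodule ℤ (ι → ℝ))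
    (hB : IsSymmBilin B) (hBnd : Nondeg B) (hG : IsGrass B pp pm)
    (hL : IsFullLattice L) (hE : IsEvenLat B L)
    (M : Submodule ℤ (ι → ℝ)) (hML : M ≤ L)
    (hMprim : ∀ x ∈ L, x ∈ Submodule.span ℝ (M : Set (ι → ℝ)) → x ∈ M)
    (hMnd : ∀ x ∈ Submodule.span ℝ (M : Set (ι → ℝ)),
      (∀ y ∈ Submodule.span ℝ (M : Set (ι → ℝ)), B x y = 0) → x = 0)
    (pM pN : (ι → ℝ) → (ι → ℝ))
    (hpM_add : ∀ x y, pM (x + y) = pM x + pM y)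
    (hpM_smul : ∀ (c : ℝ) (x), pM (c • x) = c • pM x)
    (hpMN : ∀ x, pM x + pN x = x)
    (hpM_mem : ∀ x, pM x ∈ Submodule.span ℝ (M : Set (ι → ℝ)))
    (hpM_id : ∀ x ∈ Submodule.span ℝ (M : Set (ι → ℝ)), pM x = x)
    (hpMorth : ∀ x y, B (pM x) (pN y) = 0)
    (hadapt_p : ∀ x, pp (pM x) = pM (pp x))
    (hadapt_m : ∀ x, pm (pM x) = pM (pm x))
    (lam0 : ι → ℝ) (hlam0 : lam0 ∈ dualSet B L)
    (τ : ℂ) (hτ : 0 < τ.im) (ζ : ι → ℂ) :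
    theta B pp pm L lam0 τ ζ
      = ∑' δ : DiscT M (MdualSet B M),
          theta B pp pm M (qRep δ) τ (mapC pM ζ)
            * ThetaLM B pp pm pM pN L M (mkD lam0 hlam0) δ τ (mapC pN ζ) := by
  classical
  have hMsub : ∀ m : M, (m : ι → ℝ) ∈ Submodule.span ℝ (M : Set (ι → ℝ)) :=
    fun m => Submodule.subset_span m.2
  have pN_eq : ∀ z, pN z = z - pM z := fun z => eq_sub_of_add_eq' (hpMN z)
  have hpM_M : ∀ m : M, pM (m : ι → ℝ) = (m : ι → ℝ) := fun m => hpM_id _ (hMsub m)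
  have hdual_add : ∀ μ : L, lam0 + (μ : ι → ℝ) ∈ dualSet B L := by
    intro μ m hm
    obtain ⟨n1, h1⟩ := hlam0 m hm
    obtain ⟨n2, h2⟩ := hE.1 (μ : ι → ℝ) μ.2 m hm
    exact ⟨n1 + n2, by rw [hB.1, h1, h2]; push_cast; ring⟩
  -- the three exponential functions
  set f : (ι → ℝ) → ℂ := fun x => eC (τ * (B (pp x) (pp x) : ℂ) / 2
    + (starRingEnd ℂ) τ * (B (pm x) (pm x) : ℂ) / 2 + pairC B x ζ) with hf
  set fM : (ι → ℝ) → ℂ := fun x => eC (τ * (B (pp x) (pp x) : ℂ) / 2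
    + (starRingEnd ℂ) τ * (B (pm x) (pm x) : ℂ) / 2 + pairC B x (mapC pM ζ)) with hfM
  set fN : (ι → ℝ) → ℂ := fun x => eC (τ * (B (pp x) (pp x) : ℂ) / 2
    + (starRingEnd ℂ) τ * (B (pm x) (pm x) : ℂ) / 2 + pairC B x (mapC pN ζ)) with hfN
  have hfsplit : ∀ x, f x = fM (pM x) * fN (pN x) := by
    intro x
    rw [hf, hfM, hfN]
    simp only
    rw [exponent_split hB hG hpM_add hpM_smul hpMN hpMorth hadapt_p hadapt_m τ x ζ, eC_add]
  set γ : Disc B L := mkD lam0 hlam0 with hγ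
  have hγL : qRep γ - lam0 ∈ L := qRep_mkD_sub_mem lam0 hlam0
  set S1 : Set (DiscT M (dualSet B L)) := {q | qRep q - qRep γ ∈ L} with hS1
  have hpMdual : ∀ q : DiscT M (dualSet B L), pM (qRep q) ∈ MdualSet B M := by
    intro q
    refine ⟨hpM_mem _, fun m hm => ?_⟩
    obtain ⟨n, hn⟩ := qRep_mem q m (hML hm)
    refine ⟨n, ?_⟩
    have hdec : B (qRep q) m = B (pM (qRep q)) m + B (pN (qRep q)) m := by
      conv_lhs => rw [← hpMN (qRep q)]
      rw [hB.1]
    have hzero : B (pN (qRep q)) m = 0 := by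
      rw [hB.2.2, ← hpM_id m (Submodule.subset_span hm), hpMorth]
    rw [hdec, hzero, add_zero] at hn
    exact hn
  set D : DiscT M (dualSet B L) → DiscT M (MdualSet B M) :=
    fun q => mkD (pM (qRep q)) (hpMdual q) with hD
  have hDrep : ∀ q, qRep (D q) - pM (qRep q) ∈ M := fun q => qRep_mkD_sub_mem _ _
  have hDeq : ∀ (q) (δ : DiscT M (MdualSet B M)), pM (qRep q) - qRep δ ∈ M → D q = δ :=
    fun q δ h => mkD_eq_of h
  -- the sigma-indexed function
  set SS : Set ((_q : DiscT M (dualSet B L)) × ↥M) := {p | p.1 ∈ S1} with hSS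
  set G : ((_q : DiscT M (dualSet B L)) × ↥M) → ℂ :=
    SS.indicator (fun p' => f (qRep p'.1 + (p'.2 : ι → ℝ))) with hGdef
  -- the equivalence between SS and L
  have Fdef : ∀ p : SS, qRep (p : (_q : DiscT M (dualSet B L)) × ↥M).1
      + (((p : (_q : DiscT M (dualSet B L)) × ↥M).2 : ι → ℝ)) - lam0 ∈ L := by
    rintro ⟨⟨q, m⟩, hq⟩
    have h1 : qRep q - qRep γ ∈ L := hq
    have hexp : qRep q + (m : ι → ℝ) - lam0
        = (qRep q - qRep γ) + (qRep γ - lam0) + (m : ι → ℝ) := by ring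
    rw [hexp]
    exact L.add_mem (L.add_mem h1 hγL) (hML m.2)
  set F : SS → L := fun p => ⟨_, Fdef p⟩ with hF
  have Finj : Function.Injective F := by
    rintro ⟨⟨q₁, m₁⟩, h₁⟩ ⟨⟨q₂, m₂⟩, h₂⟩ h
    have hv : qRep q₁ + (m₁ : ι → ℝ) - lam0 = qRep q₂ + (m₂ : ι → ℝ) - lam0 :=
      congrArg Subtype.val h
    have hq : q₁ = q₂ := by
      apply eq_of_qRep_sub_mem (LL := M)
      have hx : qRep q₁ - qRep q₂ = (m₂ : ι → ℝ) - (m₁ : ι → ℝ) := by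
        linear_combination hv
      rw [hx]
      exact M.sub_mem m₂.2 m₁.2
    subst hq
    have hm : m₁ = m₂ := by
      apply Subtype.ext
      linear_combination hv
    subst hm
    rfl
  have Fsurj : Function.Surjective F := by
    intro μ
    have hmem := hdual_add μ
    set q : DiscT M (dualSet B L) := mkD (lam0 + (μ : ι → ℝ)) hmem with hq
    have hq1 : qRep q - (lam0 + (μ : ι → ℝ)) ∈ M := qRep_mkD_sub_mem _ _
    have hmM : lam0 + (μ : ι → ℝ) - qRep q ∈ M := by
      have := M.neg_mem hq1
      simpa [neg_sub] using this
    have hqS1 : q ∈ S1 := by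
      show qRep q - qRep γ ∈ L
      have hexp : qRep q - qRep γ
          = (qRep q - (lam0 + (μ : ι → ℝ))) + (μ : ι → ℝ) - (qRep γ - lam0) := by ring
      rw [hexp]
      exact L.sub_mem (L.add_mem (hML hq1) μ.2) hγL
    refine ⟨⟨⟨q, ⟨lam0 + (μ : ι → ℝ) - qRep q, hmM⟩⟩, hqS1⟩, ?_⟩
    apply Subtype.ext
    show qRep q + (lam0 + (μ : ι → ℝ) - qRep q) - lam0 = (μ : ι → ℝ)
    ring
  set E : SS ≃ L := Equiv.ofBijective F ⟨Finj, Fsurj⟩ with hE'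
  have hcomp : ∀ p : SS, f (lam0 + ((E p : L) : ι → ℝ))
      = f (qRep (p : (_q : DiscT M (dualSet B L)) × ↥M).1
          + (((p : (_q : DiscT M (dualSet B L)) × ↥M).2 : ι → ℝ))) := by
    rintro ⟨⟨q, m⟩, hq⟩
    congr 1
    show lam0 + (qRep q + (m : ι → ℝ) - lam0) = qRep q + (m : ι → ℝ)
    ring
  have master : Summable (fun μ : L => f (lam0 + (μ : ι → ℝ))) := by
    simp only [hf]
    exact summable_master hB hG hL hτ ζ lam0
  have SG : Summable G := by
    rw [hGdef, ← summable_subtype_iff_indicator]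
    have hfe : (fun p : SS => f (qRep (p : (_q : DiscT M (dualSet B L)) × ↥M).1
        + (((p : (_q : DiscT M (dualSet B L)) × ↥M).2 : ι → ℝ))))
        = fun p : SS => f (lam0 + ((E p : L) : ι → ℝ)) := by
      funext p
      exact (hcomp p).symm
    show Summable (fun p : SS => f (qRep (p : (_q : DiscT M (dualSet B L)) × ↥M).1
        + (((p : (_q : DiscT M (dualSet B L)) × ↥M).2 : ι → ℝ))))
    rw [hfe]
    exact (E.summable_iff (f := fun μ : L => f (lam0 + (μ : ι → ℝ)))).2 master
  -- Step 1: rewrite theta as a sum over the sigma type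
  have step1 : theta B pp pm L lam0 τ ζ = ∑' p, G p := by
    have h0 : theta B pp pm L lam0 τ ζ = ∑' μ : L, f (lam0 + (μ : ι → ℝ)) := rfl
    rw [h0, ← E.tsum_eq (fun μ : L => f (lam0 + (μ : ι → ℝ)))]
    calc ∑' p : SS, f (lam0 + ((E p : L) : ι → ℝ))
        = ∑' p : SS, f (qRep (p : (_q : DiscT M (dualSet B L)) × ↥M).1
            + (((p : (_q : DiscT M (dualSet B L)) × ↥M).2 : ι → ℝ))) := tsum_congr hcomp
      _ = ∑' p, SS.indicator (fun p' => f (qRep p'.1 + ((p'.2 : ι → ℝ)))) p :=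
          tsum_subtype SS (fun p' => f (qRep p'.1 + ((p'.2 : ι → ℝ))))
      _ = ∑' p, G p := by rw [hGdef]
  -- Step 2: Fubini over the sigma type
  set thM : DiscT M (MdualSet B M) → ℂ :=
    fun δ => theta B pp pm M (qRep δ) τ (mapC pM ζ) with hthM
  have step4 : ∀ q, ∑' m : ↥M, G ⟨q, m⟩
      = S1.indicator (fun q' => thM (D q') * fN (pN (qRep q'))) q := by
    intro q
    by_cases hq : q ∈ S1
    · rw [Set.indicator_of_mem hq]
      have hGq : ∀ m : ↥M, G ⟨q, m⟩ = fM (pM (qRep q) + (m : ι → ℝ)) * fN (pN (qRep q)) := by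
        intro m
        rw [hGdef, Set.indicator_of_mem
          (show (⟨q, m⟩ : (_q : DiscT M (dualSet B L)) × ↥M) ∈ SS from hq)]
        rw [hfsplit]
        have e1 : pM (qRep q + (m : ι → ℝ)) = pM (qRep q) + (m : ι → ℝ) := by
          rw [hpM_add, hpM_M]
        have e2 : pN (qRep q + (m : ι → ℝ)) = pN (qRep q) := by
          rw [pN_eq, hpM_add, hpM_M m, pN_eq]
          ring
        rw [e1, e2]
      rw [tsum_congr hGq, tsum_mul_right]
      congr 1
      simp only [hthM]
      have h0 : theta B pp pm M (qRep (D q)) τ (mapC pM ζ)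
          = ∑' m : ↥M, fM (qRep (D q) + (m : ι → ℝ)) := rfl
      rw [h0]
      set c : ↥M := ⟨qRep (D q) - pM (qRep q), hDrep q⟩ with hc
      have htr := (Equiv.addLeft c).tsum_eq (fun m : ↥M => fM (pM (qRep q) + (m : ι → ℝ)))
      rw [← htr]
      apply tsum_congr
      intro m
      congr 1
      show pM (qRep q) + (((c + m : ↥M) : ι → ℝ)) = qRep (D q) + (m : ι → ℝ)
      rw [Submodule.coe_add, hc]
      ring
    · rw [Set.indicator_of_notMem hq]
      have hz : ∀ m : ↥M, G ⟨q, m⟩ = 0 := by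
        intro m
        rw [hGdef]
        exact Set.indicator_of_notMem
          (show (⟨q, m⟩ : (_q : DiscT M (dualSet B L)) × ↥M) ∉ SS from hq) _
      rw [tsum_congr hz, tsum_zero]
  have SH : Summable (fun q => S1.indicator
      (fun q' => thM (D q') * fN (pN (qRep q'))) q) := by
    have := SG.sigma
    rwa [funext step4] at this
  have step6 : ∑' q, S1.indicator (fun q' => thM (D q') * fN (pN (qRep q'))) q
      = ∑' δ, thM δ * ThetaLM B pp pm pM pN L M γ δ τ (mapC pN ζ) := by
    set H : DiscT M (dualSet B L) → ℂ :=
      S1.indicator (fun q' => thM (D q') * fN (pN (qRep q'))) with hH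
    have hEq := (Equiv.sigmaFiberEquiv D).tsum_eq H
    rw [show (∑' q, S1.indicator (fun q' => thM (D q') * fN (pN (qRep q'))) q)
      = ∑' q, H q from rfl, ← hEq]
    have hSum2 : Summable (fun p : (δ : DiscT M (MdualSet B M)) × {q // D q = δ} =>
        H ((Equiv.sigmaFiberEquiv D) p)) := (Equiv.summable_iff _).2 SH
    rw [Summable.tsum_sigma hSum2]
    apply tsum_congr
    intro δ
    rw [show (∑' (q : {q // D q = δ}), H ((Equiv.sigmaFiberEquiv D) ⟨δ, q⟩))
      = ∑' (q : {q' | D q' = δ}), H (q : DiscT M (dualSet B L)) from rfl]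
    rw [tsum_subtype {q' | D q' = δ} H]
    have key : ∀ q, ({q' | D q' = δ}).indicator H q
        = thM δ * Set.indicator
            {q' | qRep q' - qRep γ ∈ L ∧ pM (qRep q') - qRep δ ∈ M}
            (fun q' => fN (pN (qRep q'))) q := by
      intro q
      by_cases h1 : D q = δ
      · rw [Set.indicator_of_mem (show q ∈ {q' | D q' = δ} from h1), hH]
        by_cases h2 : q ∈ S1
        · rw [Set.indicator_of_mem h2]
          have hmem2 : q ∈ {q' | qRep q' - qRep γ ∈ L ∧ pM (qRep q') - qRep δ ∈ M} := by
            refine ⟨h2, ?_⟩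
            rw [← h1]
            have hneg := M.neg_mem (hDrep q)
            simpa [neg_sub] using hneg
          rw [Set.indicator_of_mem hmem2, h1]
        · rw [Set.indicator_of_notMem h2]
          have hno : q ∉ {q' | qRep q' - qRep γ ∈ L ∧ pM (qRep q') - qRep δ ∈ M} :=
            fun hc => h2 hc.1
          rw [Set.indicator_of_notMem hno, mul_zero]
      · rw [Set.indicator_of_notMem (show q ∉ {q' | D q' = δ} from h1)]
        have hno : q ∉ {q' | qRep q' - qRep γ ∈ L ∧ pM (qRep q') - qRep δ ∈ M} := by
          intro hc
          exact h1 (hDeq q δ hc.2)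
        rw [Set.indicator_of_notMem hno, mul_zero]
    rw [tsum_congr key, tsum_mul_left]
    congr 1
  rw [step1, Summable.tsum_sigma SG]
  rw [show (∑' (q : DiscT M (dualSet B L)) (m : ↥M), G ⟨q, m⟩)
    = ∑' q, S1.indicator (fun q' => thM (D q') * fN (pN (qRep q'))) q from tsum_congr step4]
  rw [step6]

end Sublattice

end JacobiIndef
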